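/- arXiv:1206.3376 — 2 statements merged into one kernel-verified Lean document; each statement's English description precedes it below -/
import Mathlib

section
/- Let a > 0, let ρ > 0 and s ∈ ℕ, and let p(ν) = (ν+ρ)(ν+ρ+1)⋯(ν+ρ+s−1) (with p ≡ 1 when s = 0). (a) If G ∈ 𝓢(S_a) is even, i.e. G(−ν) = G(ν) for all ν ∈ S_a, then the function F(ν) = p(−ν) G(ν) belongs to 𝓢(S_a) and satisfies the symmetry condition p(−ν) F(−ν) = p(ν) F(ν) for all ν ∈ S_a. (b) Conversely, if F ∈ 𝓢(S_a) satisfies p(−ν) F(−ν) = p(ν) F(ν) for all ν ∈ S_a, then there exists a unique even G ∈ 𝓢(S_a) with F(ν) = p(−ν) G(ν) for all ν ∈ S_a. Hence G ↦ p(−·)G is a bijection between the even functions in 𝓢(S_a) and the functions in 𝓢(S_a) satisfying that symmetry condition. -/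
open MeasureTheory Complex

/-- The closed strip `S_a = {z : |Re z| ≤ a}`. -/
def Strip (a : ℝ) : Set ℂ := {z : ℂ | |z.re| ≤ a}

/-- The open strip `S_a° = {z : |Re z| < a}`. -/
def StripO (a : ℝ) : Set ℂ := {z : ℂ | |z.re| < a}

/-- Membership in the strip-Schwartz space `𝓢(S_a)`: `F` is continuous on the closed strip,
holomorphic on the open strip, `Fd k` is the continuous extension to the closed strip of the
`k`-th complex derivative of `F`, and all seminorms
`sup_{z ∈ S_a} (1+|z|)^N |Fd k z|` are finite. -/
def StripSchwartz (a : ℝ) (F : ℂ → ℂ) (Fd : ℕ → ℂ → ℂ) : Prop :=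
  ContinuousOn F (Strip a) ∧
  DifferentiableOn ℂ F (StripO a) ∧
  (∀ z ∈ Strip a, Fd 0 z = F z) ∧
  (∀ k : ℕ, ∀ z ∈ StripO a, Fd k z = iteratedDeriv k F z) ∧
  (∀ k : ℕ, ContinuousOn (Fd k) (Strip a)) ∧
  (∀ N k : ℕ, ∃ C : ℝ, ∀ z ∈ Strip a,
    (1 + ‖z‖) ^ N * ‖Fd k z‖ ≤ C)

namespace StripAux

open Set Filter Topology

lemma isOpen_stripO {a : ℝ} : IsOpen (StripO a) := by
  have : StripO a = (fun z : ℂ => |z.re|) ⁻¹' (Set.Iio a) := rfl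
  rw [this]
  exact ((_root_.continuous_abs.comp Complex.continuous_re)).isOpen_preimage _ isOpen_Iio

lemma stripO_subset {a : ℝ} : StripO a ⊆ Strip a := fun z hz => le_of_lt (show |z.re| < _ from hz)

lemma neg_mem_strip {a : ℝ} {z : ℂ} (hz : z ∈ Strip a) : -z ∈ Strip a := by
  simpa [Strip, abs_neg] using hz

lemma seg_re {r z : ℂ} (t : ℝ) : (r + (t:ℂ) * (z - r)).re = (1 - t) * r.re + t * z.re := by
  simp [Complex.add_re, Complex.mul_re, Complex.ofReal_re, Complex.ofReal_im, Complex.sub_re]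
  ring

lemma seg_mem_strip {a : ℝ} {r z : ℂ} (hr : r ∈ Strip a) (hz : z ∈ Strip a) {t : ℝ}
    (ht0 : 0 ≤ t) (ht1 : t ≤ 1) : r + (t:ℂ) * (z - r) ∈ Strip a := by
  simp only [Strip, Set.mem_setOf_eq] at *
  rw [seg_re]
  calc |(1 - t) * r.re + t * z.re| ≤ (1 - t) * |r.re| + t * |z.re| := by
        refine (abs_add_le _ _).trans ?_
        rw [_root_.abs_mul, _root_.abs_mul, _root_.abs_of_nonneg (by linarith), _root_.abs_of_nonneg ht0]
    _ ≤ (1 - t) * a + t * a := by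
        have h1 : (0:ℝ) ≤ 1 - t := by linarith
        have := mul_le_mul_of_nonneg_left hr h1
        have := mul_le_mul_of_nonneg_left hz ht0
        linarith
    _ = a := by ring

lemma seg_mem_stripO {a : ℝ} {r z : ℂ} (hr : r ∈ Strip a) (hz : z ∈ StripO a) {t : ℝ}
    (ht0 : 0 < t) (ht1 : t ≤ 1) : r + (t:ℂ) * (z - r) ∈ StripO a := by
  simp only [Strip, StripO, Set.mem_setOf_eq] at *
  rw [seg_re]
  have ha : 0 ≤ a := le_trans (abs_nonneg _) hr
  calc |(1 - t) * r.re + t * z.re| ≤ (1 - t) * |r.re| + t * |z.re| := by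
        refine (abs_add_le _ _).trans ?_
        rw [_root_.abs_mul, _root_.abs_mul, _root_.abs_of_nonneg (by linarith), _root_.abs_of_nonneg (le_of_lt ht0)]
    _ < (1 - t) * a + t * a := by
        have h1 : (0:ℝ) ≤ 1 - t := by linarith
        have h2 := mul_le_mul_of_nonneg_left hr h1
        have h3 := mul_lt_mul_of_pos_left hz ht0
        linarith
    _ = a := by ring

lemma smul_mem_stripO {a : ℝ} (ha : 0 < a) {z : ℂ} (hz : z ∈ Strip a) {c : ℝ}
    (hc0 : 0 ≤ c) (hc1 : c < 1) : (c:ℂ) * z ∈ StripO a := by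
  simp only [Strip, StripO, Set.mem_setOf_eq] at *
  have : ((c:ℂ) * z).re = c * z.re := by
    simp [Complex.mul_re, Complex.ofReal_re, Complex.ofReal_im]
  rw [this, _root_.abs_mul, _root_.abs_of_nonneg hc0]
  calc c * |z.re| ≤ c * a := mul_le_mul_of_nonneg_left hz hc0
    _ < 1 * a := mul_lt_mul_of_pos_right hc1 ha
    _ = a := one_mul a

lemma approach {a : ℝ} (ha : 0 < a) {z : ℂ} (hz : z ∈ Strip a) (hz0 : z ≠ 0)
    (Z : Set ℂ) (hZ : Z.Finite) :
    ∃ u : ℕ → ℂ, (∀ᶠ n in atTop, u n ∈ StripO a \ Z) ∧ Tendsto u atTop (𝓝 z) := by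
  set c : ℕ → ℝ := fun n => 1 - 1 / (n + 2) with hc
  have hc0 : ∀ n, 0 ≤ c n := by
    intro n
    have h2 : (0:ℝ) < (n:ℝ) + 2 := by positivity
    have : 1 / ((n:ℝ) + 2) ≤ 1 := by
      rw [div_le_one h2]; linarith
    simp only [hc]; linarith
  have hc1 : ∀ n, c n < 1 := by
    intro n
    have h2 : (0:ℝ) < (n:ℝ) + 2 := by positivity
    have : 0 < 1 / ((n:ℝ) + 2) := by positivity
    simp only [hc]; linarith
  refine ⟨fun n => ((c n : ℝ) : ℂ) * z, ?_, ?_⟩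
  · have hmem : ∀ n, ((c n : ℝ) : ℂ) * z ∈ StripO a := fun n =>
      smul_mem_stripO ha hz (hc0 n) (hc1 n)
    have hinj : Function.Injective (fun n => ((c n : ℝ) : ℂ) * z) := by
      intro m n h
      have h1 : ((c m : ℝ) : ℂ) = ((c n : ℝ) : ℂ) := mul_right_cancel₀ hz0 h
      have h2 : c m = c n := Complex.ofReal_injective h1
      simp only [hc] at h2
      have hm2 : ((m:ℝ) + 2) ≠ 0 := by positivity
      have hn2 : ((n:ℝ) + 2) ≠ 0 := by positivity
      have : (m:ℝ) = (n:ℝ) := by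
        field_simp at h2
        linarith
      exact_mod_cast this
    have hfin : {n : ℕ | ((c n : ℝ) : ℂ) * z ∈ Z}.Finite := by
      have : {n : ℕ | ((c n : ℝ) : ℂ) * z ∈ Z} = (fun n => ((c n : ℝ) : ℂ) * z) ⁻¹' Z := rfl
      rw [this]
      exact Set.Finite.preimage hinj.injOn hZ
    have hev : ∀ᶠ n in atTop, ((c n : ℝ) : ℂ) * z ∉ Z := by
      have := hfin.eventually_cofinite_notMem
      rwa [Nat.cofinite_eq_atTop] at this
    filter_upwards [hev] with n hn
    exact ⟨hmem n, hn⟩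
  · have h1 : Tendsto (fun n : ℕ => 1 / ((n:ℝ) + 2)) atTop (𝓝 0) := by
      have hb : Tendsto (fun n : ℕ => (n:ℝ) + 2) atTop atTop :=
        Filter.tendsto_atTop_add_const_right _ _ tendsto_natCast_atTop_atTop
      have := tendsto_inv_atTop_zero.comp hb
      simpa [one_div, Function.comp_def] using this
    have h2 : Tendsto c atTop (𝓝 1) := by
      have := h1.const_sub 1
      simpa [hc] using this
    have h3 : Tendsto (fun n => ((c n : ℝ) : ℂ)) atTop (𝓝 (1:ℂ)) := by
      have := (Complex.continuous_ofReal.tendsto 1).comp h2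
      simpa [Function.comp_def] using this
    have := h3.mul_const z
    simpa using this

lemma eqOn_strip_diff {a : ℝ} (ha : 0 < a) (Z : Set ℂ) (hZ : Z.Finite) {f g : ℂ → ℂ}
    (hf : ContinuousOn f (Strip a \ Z)) (hg : ContinuousOn g (Strip a \ Z))
    (heq : ∀ z ∈ StripO a \ Z, f z = g z) :
    ∀ z ∈ Strip a \ Z, f z = g z := by
  intro z hz
  by_cases hzo : z ∈ StripO a
  · exact heq z ⟨hzo, hz.2⟩
  have hz0 : z ≠ 0 := by
    intro h
    apply hzo
    rw [h]
    show |(0:ℂ).re| < a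
    simpa using ha
  obtain ⟨u, hu, hul⟩ := approach ha hz.1 hz0 Z hZ
  have husub : ∀ᶠ n in atTop, u n ∈ Strip a \ Z :=
    hu.mono fun n hn => ⟨stripO_subset hn.1, hn.2⟩
  have hlim : Tendsto u atTop (𝓝[Strip a \ Z] z) :=
    tendsto_nhdsWithin_iff.mpr ⟨hul, husub⟩
  have h1 : Tendsto (f ∘ u) atTop (𝓝 (f z)) := ((hf z hz).tendsto).comp hlim
  have h2 : Tendsto (g ∘ u) atTop (𝓝 (g z)) := ((hg z hz).tendsto).comp hlim
  have hfg : f ∘ u =ᶠ[atTop] g ∘ u := hu.mono fun n hn => heq _ hn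
  exact tendsto_nhds_unique (h1.congr' hfg) h2

lemma eqOn_strip_full {a : ℝ} (ha : 0 < a) (Z : Set ℂ) (hZ : Z.Finite) (hZ0 : (0:ℂ) ∉ Z)
    {f g : ℂ → ℂ}
    (hf : ContinuousOn f (Strip a)) (hg : ContinuousOn g (Strip a))
    (heq : ∀ z ∈ StripO a \ Z, f z = g z) :
    ∀ z ∈ Strip a, f z = g z := by
  intro z hz
  by_cases hz0 : z = 0
  · subst hz0
    refine heq 0 ⟨?_, hZ0⟩
    show |(0:ℂ).re| < a
    simpa using ha
  obtain ⟨u, hu, hul⟩ := approach ha hz hz0 Z hZ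
  have husub : ∀ᶠ n in atTop, u n ∈ Strip a :=
    hu.mono fun n hn => stripO_subset hn.1
  have hlim : Tendsto u atTop (𝓝[Strip a] z) :=
    tendsto_nhdsWithin_iff.mpr ⟨hul, husub⟩
  have h1 : Tendsto (f ∘ u) atTop (𝓝 (f z)) := ((hf z hz).tendsto).comp hlim
  have h2 : Tendsto (g ∘ u) atTop (𝓝 (g z)) := ((hg z hz).tendsto).comp hlim
  have hfg : f ∘ u =ᶠ[atTop] g ∘ u := hu.mono fun n hn => heq _ hn
  exact tendsto_nhds_unique (h1.congr' hfg) h2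

lemma itd_eq_of_hasDerivAt {U : Set ℂ} (hU : IsOpen U) {G : ℂ → ℂ} {Gd : ℕ → ℂ → ℂ}
    (h0 : ∀ z ∈ U, Gd 0 z = G z)
    (hD : ∀ k, ∀ z ∈ U, HasDerivAt (Gd k) (Gd (k + 1) z) z) :
    ∀ k, ∀ z ∈ U, Gd k z = iteratedDeriv k G z := by
  intro k
  induction k with
  | zero => intro z hz; rw [iteratedDeriv_zero]; exact h0 z hz
  | succ k ih =>
    intro z hz
    rw [iteratedDeriv_succ]
    have h1 : deriv (Gd k) z = Gd (k + 1) z := (hD k z hz).deriv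
    rw [← h1]
    apply Filter.EventuallyEq.deriv_eq
    filter_upwards [hU.mem_nhds hz] with w hw
    exact ih w hw

lemma schwartz_hasDerivAt {a : ℝ} {F : ℂ → ℂ} {Fd : ℕ → ℂ → ℂ} (hF : StripSchwartz a F Fd)
    (k : ℕ) {z : ℂ} (hz : z ∈ StripO a) : HasDerivAt (Fd k) (Fd (k + 1) z) z := by
  obtain ⟨hc, hd, h0, hitd, hcd, hb⟩ := hF
  have han : ∀ m, AnalyticOnNhd ℂ (iteratedDeriv m F) (StripO a) := by
    intro m
    induction m with
    | zero =>
      rw [iteratedDeriv_zero]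
      exact hd.analyticOnNhd isOpen_stripO
    | succ m ih =>
      rw [iteratedDeriv_succ]
      exact ih.deriv
  have h1 : HasDerivAt (iteratedDeriv k F) (iteratedDeriv (k + 1) F z) z := by
    have h2 := ((han k z hz).differentiableAt).hasDerivAt
    rwa [← iteratedDeriv_succ] at h2
  have heq : Fd k =ᶠ[𝓝 z] iteratedDeriv k F := by
    filter_upwards [isOpen_stripO.mem_nhds hz] with w hw
    exact hitd k w hw
  have h3 := h1.congr_of_eventuallyEq heq
  rwa [← hitd (k + 1) z hz] at h3

lemma schwartz_F_hasDerivAt {a : ℝ} {F : ℂ → ℂ} {Fd : ℕ → ℂ → ℂ} (hF : StripSchwartz a F Fd)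
    {z : ℂ} (hz : z ∈ StripO a) : HasDerivAt F (Fd 1 z) z := by
  have h := schwartz_hasDerivAt hF 0 hz
  apply h.congr_of_eventuallyEq
  filter_upwards [isOpen_stripO.mem_nhds hz] with w hw
  exact (hF.2.2.1 w (stripO_subset hw)).symm

lemma stripSchwartz_of {a : ℝ} {G : ℂ → ℂ} {Gd : ℕ → ℂ → ℂ}
    (h0 : ∀ z ∈ Strip a, Gd 0 z = G z)
    (hD : ∀ k, ∀ z ∈ StripO a, HasDerivAt (Gd k) (Gd (k + 1) z) z)
    (hcont : ∀ k, ContinuousOn (Gd k) (Strip a))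
    (hb : ∀ N k : ℕ, ∃ C : ℝ, ∀ z ∈ Strip a,
      (1 + ‖z‖) ^ N * ‖Gd k z‖ ≤ C) :
    StripSchwartz a G Gd := by
  have hitd : ∀ k, ∀ z ∈ StripO a, Gd k z = iteratedDeriv k G z :=
    itd_eq_of_hasDerivAt isOpen_stripO (fun z hz => h0 z (stripO_subset hz)) hD
  refine ⟨?_, ?_, h0, hitd, hcont, hb⟩
  · exact (hcont 0).congr fun z hz => (h0 z hz).symm
  · intro z hz
    have h1 := hD 0 z hz
    have h2 : HasDerivAt G (Gd 1 z) z := by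
      apply h1.congr_of_eventuallyEq
      filter_upwards [isOpen_stripO.mem_nhds hz] with w hw
      exact (h0 w (stripO_subset hw)).symm
    exact h2.differentiableAt.differentiableWithinAt

lemma abs_sub_le' (x y : ℂ) : ‖x - y‖ ≤ ‖x‖ + ‖y‖ := by
  simpa using norm_sub_le x y

lemma one_add_abs_pow_nonneg (z : ℂ) (N : ℕ) : (0:ℝ) ≤ (1 + ‖z‖) ^ N := by
  positivity

lemma mul_linear {a : ℝ} (r : ℂ) {G : ℂ → ℂ} {Gd : ℕ → ℂ → ℂ} (hG : StripSchwartz a G Gd) :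
    StripSchwartz a (fun ν => (r - ν) * G ν)
      (fun k ν => (r - ν) * Gd k ν - (k : ℂ) * Gd (k - 1) ν) := by
  apply stripSchwartz_of
  · intro z hz
    rw [hG.2.2.1 z hz]; simp
  · intro k z hz
    have hlin : HasDerivAt (fun ν : ℂ => r - ν) (-1) z := by
      simpa using (hasDerivAt_id z).const_sub r
    have h1 : HasDerivAt (Gd k) (Gd (k + 1) z) z := schwartz_hasDerivAt hG k hz
    cases k with
    | zero =>
      have hmul := hlin.mul h1
      have h2 : HasDerivAt (fun ν => (r - ν) * Gd 0 ν - ((0:ℕ) : ℂ) * Gd (0 - 1) ν)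
          (-1 * Gd 0 z + (r - z) * Gd 1 z) z := by
        simpa [Pi.mul_def] using hmul
      have h3 := h2
      convert h3 using 1
      push_cast
      ring
    | succ k =>
      have h0 : HasDerivAt (Gd k) (Gd (k + 1) z) z := schwartz_hasDerivAt hG k hz
      have hmul := hlin.mul h1
      have hsecond := h0.const_mul (((k:ℂ) + 1))
      have h2 := hmul.sub hsecond
      have h4 : HasDerivAt (fun ν => (r - ν) * Gd (k + 1) ν - ((k + 1 : ℕ) : ℂ) * Gd (k + 1 - 1) ν)
          (-1 * Gd (k + 1) z + (r - z) * Gd (k + 2) z - ((k:ℂ) + 1) * Gd (k + 1) z) z := by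
        have hfun : (fun ν => (r - ν) * Gd (k + 1) ν - ((k + 1 : ℕ) : ℂ) * Gd (k + 1 - 1) ν)
            = (fun ν => (r - ν) * Gd (k + 1) ν - ((k:ℂ) + 1) * Gd k ν) := by
          funext ν; push_cast; ring_nf
        rw [hfun]
        exact h2
      convert h4 using 1
      push_cast
      ring
  · intro k
    have hlincont : ContinuousOn (fun ν : ℂ => r - ν) (Strip a) :=
      (continuousOn_const.sub continuousOn_id)
    exact (hlincont.mul (hG.2.2.2.2.1 k)).sub (continuousOn_const.mul (hG.2.2.2.2.1 (k - 1)))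
  · intro N k
    obtain ⟨C1, hC1⟩ := hG.2.2.2.2.2 (N + 1) k
    obtain ⟨C2, hC2⟩ := hG.2.2.2.2.2 N (k - 1)
    refine ⟨(1 + ‖r‖) * C1 + (k : ℝ) * C2, ?_⟩
    intro z hz
    have hP : (0:ℝ) ≤ (1 + ‖z‖) ^ N := by positivity
    have habs : ‖(r - z) * Gd k z - (k : ℂ) * Gd (k - 1) z‖
        ≤ ‖r - z‖ * ‖Gd k z‖ + (k : ℝ) * ‖Gd (k - 1) z‖ := by
      refine (abs_sub_le' _ _).trans ?_
      rw [norm_mul, norm_mul]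
      simp
    have hr1 : ‖r - z‖ ≤ (1 + ‖r‖) * (1 + ‖z‖) := by
      have := abs_sub_le' r z
      nlinarith [norm_nonneg r, norm_nonneg z]
    calc (1 + ‖z‖) ^ N * ‖(r - z) * Gd k z - (k : ℂ) * Gd (k - 1) z‖
        ≤ (1 + ‖z‖) ^ N *
          (‖r - z‖ * ‖Gd k z‖ + (k : ℝ) * ‖Gd (k - 1) z‖) :=
          mul_le_mul_of_nonneg_left habs hP
      _ = ‖r - z‖ * ((1 + ‖z‖) ^ N * ‖Gd k z‖)
          + (k : ℝ) * ((1 + ‖z‖) ^ N * ‖Gd (k - 1) z‖) := by ring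
      _ ≤ (1 + ‖r‖) * (1 + ‖z‖) * ((1 + ‖z‖) ^ N * ‖Gd k z‖)
          + (k : ℝ) * C2 := by
          have t1 : ‖r - z‖ * ((1 + ‖z‖) ^ N * ‖Gd k z‖)
              ≤ (1 + ‖r‖) * (1 + ‖z‖) * ((1 + ‖z‖) ^ N * ‖Gd k z‖) := by
            apply mul_le_mul_of_nonneg_right hr1
            positivity
          have t2 : (k : ℝ) * ((1 + ‖z‖) ^ N * ‖Gd (k - 1) z‖) ≤ (k : ℝ) * C2 :=
            mul_le_mul_of_nonneg_left (hC2 z hz) (Nat.cast_nonneg k)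
          linarith
      _ ≤ (1 + ‖r‖) * C1 + (k : ℝ) * C2 := by
          have t3 : (1 + ‖z‖) * ((1 + ‖z‖) ^ N * ‖Gd k z‖)
              = (1 + ‖z‖) ^ (N + 1) * ‖Gd k z‖ := by ring
          have t4 : (1 + ‖r‖) * ((1 + ‖z‖) * ((1 + ‖z‖) ^ N * ‖Gd k z‖))
              ≤ (1 + ‖r‖) * C1 := by
            rw [t3]
            apply mul_le_mul_of_nonneg_left (hC1 z hz)
            positivity
          linarith [t4]

lemma mul_prod {a : ℝ} (c : ℕ → ℂ) {G : ℂ → ℂ} {Gd : ℕ → ℂ → ℂ} (hG : StripSchwartz a G Gd) :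
    ∀ m : ℕ, ∃ Fd, StripSchwartz a (fun ν => (∏ i ∈ Finset.range m, (c i - ν)) * G ν) Fd := by
  intro m
  induction m with
  | zero =>
    refine ⟨Gd, ?_⟩
    have : (fun ν : ℂ => (∏ i ∈ Finset.range 0, (c i - ν)) * G ν) = fun ν => G ν := by
      funext ν; simp
    rw [this]
    exact hG
  | succ m ih =>
    obtain ⟨Fd, hFd⟩ := ih
    have h2 := mul_linear (c m) hFd
    have hfun : (fun ν : ℂ => (∏ i ∈ Finset.range (m + 1), (c i - ν)) * G ν)
        = (fun ν => (c m - ν) * ((∏ i ∈ Finset.range m, (c i - ν)) * G ν)) := by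
      funext ν
      rw [Finset.prod_range_succ]
      ring
    exact ⟨_, hfun ▸ h2⟩

noncomputable def divSeq (F : ℂ → ℂ) (Fd : ℕ → ℂ → ℂ) (r : ℂ) : ℕ → ℂ → ℂ
  | 0 => fun ν => F ν * (r - ν)⁻¹
  | (k + 1) => fun ν => (Fd (k + 1) ν + ((k : ℂ) + 1) * divSeq F Fd r k ν) * (r - ν)⁻¹

lemma inv_hasDerivAt {r z : ℂ} (hrz : r - z ≠ 0) :
    HasDerivAt (fun ν : ℂ => (r - ν)⁻¹) ((r - z)⁻¹ * (r - z)⁻¹) z := by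
  have h1 : HasDerivAt (fun ν : ℂ => r - ν) (-1) z := by
    simpa using (hasDerivAt_id z).const_sub r
  have h2 := h1.fun_inv hrz
  refine h2.congr_deriv ?_
  field_simp

lemma divSeq_hasDerivAt {a : ℝ} {F : ℂ → ℂ} {Fd : ℕ → ℂ → ℂ} {r : ℂ}
    (hF : StripSchwartz a F Fd) {z : ℂ} (hz : z ∈ StripO a) (hrz : r - z ≠ 0) (k : ℕ) :
    HasDerivAt (divSeq F Fd r k) (divSeq F Fd r (k + 1) z) z := by
  induction k with
  | zero =>
    have hF' : HasDerivAt F (Fd 1 z) z := schwartz_F_hasDerivAt hF hz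
    have hinv := inv_hasDerivAt hrz
    have h := hF'.fun_mul hinv
    have hgoal : HasDerivAt (fun ν => F ν * (r - ν)⁻¹)
        ((Fd 1 z + ((0:ℂ) + 1) * (F z * (r - z)⁻¹)) * (r - z)⁻¹) z := by
      refine h.congr_deriv ?_
      ring
    simpa [divSeq] using hgoal
  | succ k ih =>
    have h1 : HasDerivAt (Fd (k + 1)) (Fd (k + 2) z) z := schwartz_hasDerivAt hF (k + 1) hz
    have hinv := inv_hasDerivAt hrz
    have hsum := h1.add (ih.const_mul ((k : ℂ) + 1))
    have h := hsum.fun_mul hinv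
    have hgoal : HasDerivAt (fun ν => (Fd (k + 1) ν + ((k : ℂ) + 1) * divSeq F Fd r k ν) * (r - ν)⁻¹)
        ((Fd (k + 2) z + (((k:ℂ) + 1) + 1) * ((Fd (k + 1) z + ((k : ℂ) + 1) * divSeq F Fd r k z) * (r - z)⁻¹)) * (r - z)⁻¹) z := by
      refine h.congr_deriv ?_
      simp only [divSeq, Pi.add_apply]
      ring
    have : divSeq F Fd r (k + 1 + 1) z
        = (Fd (k + 2) z + (((k:ℂ) + 1) + 1) * ((Fd (k + 1) z + ((k : ℂ) + 1) * divSeq F Fd r k z) * (r - z)⁻¹)) * (r - z)⁻¹ := by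
      simp only [divSeq]
      push_cast
      ring
    rw [show (k + 1 + 1 : ℕ) = k + 2 from rfl] at this
    have hfun : divSeq F Fd r (k + 1) = fun ν => (Fd (k + 1) ν + ((k : ℂ) + 1) * divSeq F Fd r k ν) * (r - ν)⁻¹ := by
      simp [divSeq]
    rw [hfun, this]
    exact hgoal

lemma divSeq_continuousOn {a : ℝ} {F : ℂ → ℂ} {Fd : ℕ → ℂ → ℂ} {r : ℂ}
    (hF : StripSchwartz a F Fd) {s : Set ℂ} (hs : s ⊆ Strip a)
    (hne : ∀ z ∈ s, r - z ≠ 0) (k : ℕ) :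
    ContinuousOn (divSeq F Fd r k) s := by
  have hinv : ContinuousOn (fun ν : ℂ => (r - ν)⁻¹) s :=
    (continuousOn_const.sub continuousOn_id).inv₀ hne
  induction k with
  | zero => exact ((hF.1.mono hs).mul hinv)
  | succ k ih =>
    have : ContinuousOn (fun ν => (Fd (k + 1) ν + ((k : ℂ) + 1) * divSeq F Fd r k ν) * (r - ν)⁻¹) s :=
      (((hF.2.2.2.2.1 (k + 1)).mono hs).add (continuousOn_const.mul ih)).mul hinv
    simpa [divSeq] using this

lemma divSeq_bound {a : ℝ} {F : ℂ → ℂ} {Fd : ℕ → ℂ → ℂ} {r : ℂ}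
    (hF : StripSchwartz a F Fd) (T : Set ℂ) (hT : T ⊆ Strip a) {m : ℝ} (hm : 0 < m)
    (hlow : ∀ z ∈ T, m ≤ ‖r - z‖) :
    ∀ N k : ℕ, ∃ C : ℝ, ∀ z ∈ T, (1 + ‖z‖) ^ N * ‖divSeq F Fd r k z‖ ≤ C := by
  have hinvb : ∀ z ∈ T, ‖(r - z)⁻¹‖ ≤ m⁻¹ := by
    intro z hz
    rw [norm_inv]
    exact inv_anti₀ hm (hlow z hz)
  intro N k
  induction k with
  | zero =>
    obtain ⟨C0, hC0⟩ := hF.2.2.2.2.2 N 0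
    refine ⟨C0 * m⁻¹, ?_⟩
    intro z hz
    have hFz : F z = Fd 0 z := (hF.2.2.1 z (hT hz)).symm
    have h1 : (1 + ‖z‖) ^ N * ‖F z * (r - z)⁻¹‖
        = ((1 + ‖z‖) ^ N * ‖Fd 0 z‖) * ‖(r - z)⁻¹‖ := by
      rw [norm_mul, hFz]; ring
    have h2 : (0:ℝ) ≤ (1 + ‖z‖) ^ N * ‖Fd 0 z‖ := by positivity
    have := mul_le_mul (hC0 z (hT hz)) (hinvb z hz) (norm_nonneg _)
      (le_trans h2 (hC0 z (hT hz)))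
    have hgoal : (1 + ‖z‖) ^ N * ‖divSeq F Fd r 0 z‖ ≤ C0 * m⁻¹ := by
      simp only [divSeq, h1]
      exact this
    exact hgoal
  | succ k ih =>
    obtain ⟨C1, hC1⟩ := hF.2.2.2.2.2 N (k + 1)
    obtain ⟨C2, hC2⟩ := ih
    refine ⟨(C1 + ((k:ℝ) + 1) * C2) * m⁻¹, ?_⟩
    intro z hz
    have hsum : ‖Fd (k + 1) z + ((k : ℂ) + 1) * divSeq F Fd r k z‖
        ≤ ‖Fd (k + 1) z‖ + ((k:ℝ) + 1) * ‖divSeq F Fd r k z‖ := by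
      refine (norm_add_le _ _).trans ?_
      rw [norm_mul]
      have : ‖(k : ℂ) + 1‖ = (k : ℝ) + 1 := by
        rw [show ((k:ℂ) + 1) = (((k:ℝ) + 1 : ℝ) : ℂ) by push_cast; ring]
        rw [Complex.norm_real, Real.norm_eq_abs]
        rw [_root_.abs_of_nonneg (by positivity)]
      rw [this]
    have hP : (0:ℝ) ≤ (1 + ‖z‖) ^ N := by positivity
    have hkey : (1 + ‖z‖) ^ N * ‖Fd (k + 1) z + ((k : ℂ) + 1) * divSeq F Fd r k z‖
        ≤ C1 + ((k:ℝ) + 1) * C2 := by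
      calc (1 + ‖z‖) ^ N * ‖Fd (k + 1) z + ((k : ℂ) + 1) * divSeq F Fd r k z‖
          ≤ (1 + ‖z‖) ^ N *
            (‖Fd (k + 1) z‖ + ((k:ℝ) + 1) * ‖divSeq F Fd r k z‖) :=
            mul_le_mul_of_nonneg_left hsum hP
        _ = (1 + ‖z‖) ^ N * ‖Fd (k + 1) z‖
            + ((k:ℝ) + 1) * ((1 + ‖z‖) ^ N * ‖divSeq F Fd r k z‖) := by ring
        _ ≤ C1 + ((k:ℝ) + 1) * C2 := by
            have t1 := hC1 z (hT hz)
            have t2 := mul_le_mul_of_nonneg_left (hC2 z hz) (by positivity : (0:ℝ) ≤ (k:ℝ) + 1)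
            linarith
    have h1 : (1 + ‖z‖) ^ N * ‖divSeq F Fd r (k + 1) z‖
        = ((1 + ‖z‖) ^ N * ‖Fd (k + 1) z + ((k : ℂ) + 1) * divSeq F Fd r k z‖)
          * ‖(r - z)⁻¹‖ := by
      simp only [divSeq, norm_mul]
      ring
    rw [h1]
    have hkeynn : (0:ℝ) ≤ (1 + ‖z‖) ^ N * ‖Fd (k + 1) z + ((k : ℂ) + 1) * divSeq F Fd r k z‖ := by positivity
    exact mul_le_mul hkey (hinvb z hz) (norm_nonneg _) (le_trans hkeynn hkey)

noncomputable def intSeq (Fd : ℕ → ℂ → ℂ) (r : ℂ) (k : ℕ) (ν : ℂ) : ℂ :=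
  -∫ t in (0:ℝ)..1, ((t:ℂ) ^ k * Fd (k + 1) (r + (t:ℂ) * (ν - r)))

lemma inner_continuous (r x : ℂ) : Continuous (fun t : ℝ => r + (t:ℂ) * (x - r)) :=
  continuous_const.add (Complex.continuous_ofReal.mul continuous_const)

lemma integrand_contOn {a : ℝ} {F : ℂ → ℂ} {Fd : ℕ → ℂ → ℂ} (hF : StripSchwartz a F Fd)
    {r x : ℂ} (hr : r ∈ Strip a) (hx : x ∈ Strip a) (k m : ℕ) :
    ContinuousOn (fun t : ℝ => (t:ℂ) ^ k * Fd m (r + (t:ℂ) * (x - r))) (Set.Icc 0 1) := by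
  have h1 : ContinuousOn (fun t : ℝ => (t:ℂ) ^ k) (Set.Icc 0 1) :=
    (Complex.continuous_ofReal.pow k).continuousOn
  have h2 : ContinuousOn (fun t : ℝ => Fd m (r + (t:ℂ) * (x - r))) (Set.Icc 0 1) := by
    apply (hF.2.2.2.2.1 m).comp (inner_continuous r x).continuousOn
    intro t ht
    exact seg_mem_strip hr hx ht.1 ht.2
  exact h1.mul h2

lemma integrand_aesm {a : ℝ} {F : ℂ → ℂ} {Fd : ℕ → ℂ → ℂ} (hF : StripSchwartz a F Fd)
    {r x : ℂ} (hr : r ∈ Strip a) (hx : x ∈ Strip a) (k m : ℕ) :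
    AEStronglyMeasurable (fun t : ℝ => (t:ℂ) ^ k * Fd m (r + (t:ℂ) * (x - r)))
      (volume.restrict (Set.uIoc (0:ℝ) 1)) := by
  rw [Set.uIoc_of_le (zero_le_one)]
  exact ((integrand_contOn hF hr hx k m).mono Set.Ioc_subset_Icc_self).aestronglyMeasurable
    measurableSet_Ioc

lemma abs_bound_const {a : ℝ} {F : ℂ → ℂ} {Fd : ℕ → ℂ → ℂ} (hF : StripSchwartz a F Fd) (m : ℕ) :
    ∃ C : ℝ, 0 ≤ C ∧ ∀ w ∈ Strip a, ‖Fd m w‖ ≤ C := by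
  obtain ⟨C, hC⟩ := hF.2.2.2.2.2 0 m
  refine ⟨max C 0, le_max_right _ _, ?_⟩
  intro w hw
  have := hC w hw
  simp only [pow_zero, one_mul] at this
  exact this.trans (le_max_left _ _)

lemma integrand_norm_le {r x : ℂ} {m : ℕ} {Fd : ℕ → ℂ → ℂ} {C : ℝ} {k : ℕ} {t : ℝ}
    (hC : ‖Fd m (r + (t:ℂ) * (x - r))‖ ≤ C)
    (ht0 : 0 < t) (ht1 : t ≤ 1) :
    ‖(t:ℂ) ^ k * Fd m (r + (t:ℂ) * (x - r))‖ ≤ C := by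
  have hCnn : 0 ≤ C := le_trans (norm_nonneg _) hC
  rw [norm_mul, norm_pow, Complex.norm_real, Real.norm_eq_abs,
    _root_.abs_of_nonneg (le_of_lt ht0)]
  calc t ^ k * ‖Fd m (r + (t:ℂ) * (x - r))‖
      ≤ 1 * C := by
        apply mul_le_mul (pow_le_one₀ (le_of_lt ht0) ht1) hC (norm_nonneg _) zero_le_one
    _ = C := one_mul C

lemma intSeq_continuousOn {a : ℝ} {F : ℂ → ℂ} {Fd : ℕ → ℂ → ℂ} (hF : StripSchwartz a F Fd)
    {r : ℂ} (hr : r ∈ Strip a) (k : ℕ) :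
    ContinuousOn (intSeq Fd r k) (Strip a) := by
  intro x₀ hx₀
  obtain ⟨C0, hC0nn, hC0⟩ := abs_bound_const hF (k + 1)
  apply ContinuousWithinAt.neg
  apply intervalIntegral.continuousWithinAt_of_dominated_interval (bound := fun _ => C0)
  · filter_upwards [self_mem_nhdsWithin] with x hx
    exact integrand_aesm hF hr hx k (k + 1)
  · filter_upwards [self_mem_nhdsWithin] with x hx
    apply Filter.Eventually.of_forall
    intro t ht
    rw [Set.uIoc_of_le zero_le_one] at ht
    exact integrand_norm_le (hC0 _ (seg_mem_strip hr hx (le_of_lt ht.1) ht.2)) ht.1 ht.2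
  · exact intervalIntegrable_const
  · apply Filter.Eventually.of_forall
    intro t ht
    rw [Set.uIoc_of_le zero_le_one] at ht
    apply ContinuousWithinAt.mul continuousWithinAt_const
    have hw : r + (t:ℂ) * (x₀ - r) ∈ Strip a := seg_mem_strip hr hx₀ (le_of_lt ht.1) ht.2
    have hin : Continuous (fun x : ℂ => r + (t:ℂ) * (x - r)) :=
      continuous_const.add (continuous_const.mul (continuous_id.sub continuous_const))
    exact ContinuousWithinAt.comp ((hF.2.2.2.2.1 (k + 1)) _ hw) hin.continuousWithinAt
      (fun x hx => seg_mem_strip hr hx (le_of_lt ht.1) ht.2)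

lemma intSeq_hasDerivAt {a : ℝ} {F : ℂ → ℂ} {Fd : ℕ → ℂ → ℂ} (hF : StripSchwartz a F Fd)
    {r : ℂ} (hr : r ∈ Strip a) {z₀ : ℂ} (hz₀ : z₀ ∈ StripO a) (k : ℕ) :
    HasDerivAt (intSeq Fd r k) (intSeq Fd r (k + 1) z₀) z₀ := by
  obtain ⟨ε, hε, hball⟩ := Metric.isOpen_iff.1 isOpen_stripO z₀ hz₀
  obtain ⟨C0, hC0nn, hC0⟩ := abs_bound_const hF (k + 2)
  have key := intervalIntegral.hasDerivAt_integral_of_dominated_loc_of_deriv_le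
    (F := fun x t => (t:ℂ) ^ k * Fd (k + 1) (r + (t:ℂ) * (x - r)))
    (F' := fun x t => (t:ℂ) ^ (k + 1) * Fd (k + 2) (r + (t:ℂ) * (x - r)))
    (x₀ := z₀) (a := (0:ℝ)) (b := 1) (bound := fun _ => C0) (μ := volume) (Metric.ball_mem_nhds z₀ hε)
    ?_ ?_ ?_ ?_ ?_ ?_
  · have h2 := key.2.neg
    have hgoal : HasDerivAt (fun x => -∫ t in (0:ℝ)..1, ((t:ℂ) ^ k * Fd (k + 1) (r + (t:ℂ) * (x - r))))
        (-∫ t in (0:ℝ)..1, ((t:ℂ) ^ (k + 1) * Fd (k + 2) (r + (t:ℂ) * (z₀ - r)))) z₀ := h2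
    exact hgoal
  · filter_upwards [isOpen_stripO.mem_nhds hz₀] with x hx
    exact integrand_aesm hF hr (stripO_subset hx) k (k + 1)
  · apply ContinuousOn.intervalIntegrable
    rw [Set.uIcc_of_le zero_le_one]
    exact integrand_contOn hF hr (stripO_subset hz₀) k (k + 1)
  · exact integrand_aesm hF hr (stripO_subset hz₀) (k + 1) (k + 2)
  · apply Filter.Eventually.of_forall
    intro t ht x hx
    rw [Set.uIoc_of_le zero_le_one] at ht
    have hxS : x ∈ Strip a := stripO_subset (hball hx)
    exact integrand_norm_le (hC0 _ (seg_mem_strip hr hxS (le_of_lt ht.1) ht.2)) ht.1 ht.2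
  · exact intervalIntegrable_const
  · apply Filter.Eventually.of_forall
    intro t ht x hx
    rw [Set.uIoc_of_le zero_le_one] at ht
    have hxO : x ∈ StripO a := hball hx
    have hw : r + (t:ℂ) * (x - r) ∈ StripO a := seg_mem_stripO hr hxO ht.1 ht.2
    have hinner : HasDerivAt (fun ν : ℂ => r + (t:ℂ) * (ν - r)) ((t:ℂ)) x := by
      have h1 := (((hasDerivAt_id x).sub_const r).const_mul ((t:ℝ):ℂ)).const_add r
      simpa using h1
    have houter : HasDerivAt (Fd (k + 1)) (Fd (k + 2) (r + (t:ℂ) * (x - r))) (r + (t:ℂ) * (x - r)) :=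
      schwartz_hasDerivAt hF (k + 1) hw
    have hcomp := HasDerivAt.comp (𝕜 := ℂ) (𝕜' := ℂ) x houter hinner
    have hfinal := hcomp.const_mul ((t:ℂ) ^ k)
    have hgoal : HasDerivAt (fun ν => (t:ℂ) ^ k * Fd (k + 1) (r + (t:ℂ) * (ν - r)))
        ((t:ℂ) ^ (k + 1) * Fd (k + 2) (r + (t:ℂ) * (x - r))) x := by
      have hfun : (fun ν => (t:ℂ) ^ k * (Fd (k + 1) ∘ fun ν : ℂ => r + (t:ℂ) * (ν - r)) ν)
          = (fun ν => (t:ℂ) ^ k * Fd (k + 1) (r + (t:ℂ) * (ν - r))) := by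
        funext ν; simp [Function.comp]
      rw [← hfun]
      refine hfinal.congr_deriv ?_
      ring
    exact hgoal

lemma key_identity {a : ℝ} (ha : 0 < a) {F : ℂ → ℂ} {Fd : ℕ → ℂ → ℂ}
    (hF : StripSchwartz a F Fd) {r : ℂ} (hr : r ∈ Strip a) (hvan : F r = 0) :
    ∀ ν ∈ Strip a, F ν = (r - ν) * intSeq Fd r 0 ν := by
  have hO : ∀ ν ∈ StripO a, F ν = (r - ν) * intSeq Fd r 0 ν := by
    intro ν hν
    have hνS : ν ∈ Strip a := stripO_subset hν
    set g : ℝ → ℂ := fun t => F (r + (t:ℂ) * (ν - r)) with hgdef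
    have hcont : ContinuousOn g (Set.Icc 0 1) := by
      apply hF.1.comp (inner_continuous r ν).continuousOn
      intro t ht
      exact seg_mem_strip hr hνS ht.1 ht.2
    have hderiv : ∀ t ∈ Set.Ioo (0:ℝ) 1,
        HasDerivAt g (Fd 1 (r + (t:ℂ) * (ν - r)) * (ν - r)) t := by
      intro t ht
      have hw : r + (t:ℂ) * (ν - r) ∈ StripO a := seg_mem_stripO hr hν ht.1 (le_of_lt ht.2)
      have houter : HasDerivAt F (Fd 1 (r + (t:ℂ) * (ν - r))) (r + (t:ℂ) * (ν - r)) :=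
        schwartz_F_hasDerivAt hF hw
      have hinner : HasDerivAt (fun t : ℝ => r + (t:ℂ) * (ν - r)) (ν - r) t := by
        have h0 : HasDerivAt (fun t : ℝ => ((t:ℝ):ℂ)) 1 t := by
          exact Complex.ofRealCLM.hasDerivAt (x := t)
        have h1 := (h0.mul_const (ν - r)).const_add r
        simpa using h1
      exact HasDerivAt.comp (𝕜 := ℝ) (𝕜' := ℂ) t houter hinner
    have hint : IntervalIntegrable (fun t : ℝ => Fd 1 (r + (t:ℂ) * (ν - r)) * (ν - r))
        volume 0 1 := by
      apply ContinuousOn.intervalIntegrable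
      rw [Set.uIcc_of_le zero_le_one]
      have := integrand_contOn hF hr hνS 0 1
      simp only [pow_zero, one_mul] at this
      exact this.mul continuousOn_const
    have hFTC := intervalIntegral.integral_eq_sub_of_hasDerivAt_of_le zero_le_one hcont hderiv hint
    have hg1 : g 1 = F ν := by
      simp only [hgdef]
      norm_num
    have hg0 : g 0 = 0 := by
      simp only [hgdef]
      norm_num
      exact hvan
    rw [hg1, hg0, sub_zero] at hFTC
    have hpull : ∫ t in (0:ℝ)..1, (Fd 1 (r + (t:ℂ) * (ν - r)) * (ν - r))
        = (∫ t in (0:ℝ)..1, Fd 1 (r + (t:ℂ) * (ν - r))) * (ν - r) :=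
      intervalIntegral.integral_mul_const _ _
    rw [hpull] at hFTC
    have : intSeq Fd r 0 ν = -∫ t in (0:ℝ)..1, Fd 1 (r + (t:ℂ) * (ν - r)) := by
      simp [intSeq]
    rw [this, ← hFTC]
    ring
  intro ν hν
  apply eqOn_strip_full ha ∅ Set.finite_empty (Set.notMem_empty _) hF.1
    (continuousOn_const.sub continuousOn_id |>.mul (intSeq_continuousOn hF hr 0))
    (fun z hz => hO z hz.1) ν hν

lemma div_step {a : ℝ} (ha : 0 < a) (r : ℂ) {F : ℂ → ℂ} {Fd : ℕ → ℂ → ℂ}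
    (hF : StripSchwartz a F Fd) (hvan : r ∈ Strip a → F r = 0) :
    ∃ G Gd, StripSchwartz a G Gd ∧ ∀ ν ∈ Strip a, F ν = (r - ν) * G ν := by
  by_cases hr : r ∈ Strip a
  · -- in-strip root
    have hkey : ∀ ν ∈ Strip a, F ν = (r - ν) * intSeq Fd r 0 ν :=
      key_identity ha hF hr (hvan hr)
    have hcontI : ∀ k, ContinuousOn (intSeq Fd r k) (Strip a) := intSeq_continuousOn hF hr
    have hDI : ∀ k, ∀ z ∈ StripO a, HasDerivAt (intSeq Fd r k) (intSeq Fd r (k + 1) z) z :=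
      fun k z hz => intSeq_hasDerivAt hF hr hz k
    have hitdI : ∀ k, ∀ z ∈ StripO a, intSeq Fd r k z = iteratedDeriv k (intSeq Fd r 0) z :=
      itd_eq_of_hasDerivAt isOpen_stripO (fun _ _ => rfl) hDI
    have hU : IsOpen (StripO a \ {r}) := isOpen_stripO.sdiff isClosed_singleton
    have hUsub : StripO a \ {r} ⊆ StripO a := Set.diff_subset
    have hne : ∀ z ∈ StripO a \ {r}, r - z ≠ 0 := by
      intro z hz
      have : z ≠ r := hz.2
      exact sub_ne_zero.mpr (Ne.symm this)
    have h0L : ∀ z ∈ StripO a \ {r}, divSeq F Fd r 0 z = intSeq Fd r 0 z := by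
      intro z hz
      have h1 := hkey z (stripO_subset hz.1)
      have h2 := hne z hz
      show F z * (r - z)⁻¹ = intSeq Fd r 0 z
      rw [h1]
      field_simp
    have hitdL : ∀ k, ∀ z ∈ StripO a \ {r}, divSeq F Fd r k z = iteratedDeriv k (intSeq Fd r 0) z :=
      itd_eq_of_hasDerivAt hU h0L
        (fun k z hz => divSeq_hasDerivAt hF (hUsub hz) (hne z hz) k)
    have hE : ∀ k, ∀ z ∈ Strip a \ {r}, intSeq Fd r k z = divSeq F Fd r k z := by
      intro k
      apply eqOn_strip_diff ha {r} (Set.finite_singleton r)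
        ((hcontI k).mono Set.diff_subset)
        (divSeq_continuousOn hF (Set.diff_subset.trans (by exact fun z hz => hz))
          (fun z hz => sub_ne_zero.mpr (Ne.symm hz.2)) k)
      intro z hz
      rw [hitdI k z hz.1, hitdL k z hz]
    refine ⟨intSeq Fd r 0, intSeq Fd r, ?_, hkey⟩
    apply stripSchwartz_of (fun _ _ => rfl) hDI hcontI
    intro N k
    obtain ⟨C1, hC1⟩ := divSeq_bound hF {z | z ∈ Strip a ∧ 1 ≤ ‖r - z‖}
      (fun z hz => hz.1) one_pos (fun z hz => hz.2) N k
    obtain ⟨C0, hC0nn, hC0⟩ := abs_bound_const hF (k + 1)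
    refine ⟨max C1 ((2 + ‖r‖) ^ N * C0), ?_⟩
    intro z hz
    by_cases h1 : 1 ≤ ‖r - z‖
    · have hzr : z ≠ r := by
        intro h
        rw [h] at h1
        simp at h1
        linarith
      have := hE k z ⟨hz, by simp [hzr]⟩
      rw [this]
      exact le_trans (hC1 z ⟨hz, h1⟩) (le_max_left _ _)
    · push_neg at h1
      have habsz : ‖z‖ ≤ ‖r‖ + 1 := by
        have h2 : z = r - (r - z) := by ring
        calc ‖z‖ = ‖r - (r - z)‖ := by rw [← h2]
          _ ≤ ‖r‖ + ‖r - z‖ := abs_sub_le' _ _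
          _ ≤ ‖r‖ + 1 := by linarith
      have hI : ‖intSeq Fd r k z‖ ≤ C0 := by
        have hnorm : ‖∫ t in (0:ℝ)..1, ((t:ℂ) ^ k * Fd (k + 1) (r + (t:ℂ) * (z - r)))‖
            ≤ C0 * |1 - 0| := by
          apply intervalIntegral.norm_integral_le_of_norm_le_const
          intro t ht
          rw [Set.uIoc_of_le zero_le_one] at ht
          exact integrand_norm_le (hC0 _ (seg_mem_strip hr hz (le_of_lt ht.1) ht.2)) ht.1 ht.2
        have : ‖intSeq Fd r k z‖
            = ‖∫ t in (0:ℝ)..1, ((t:ℂ) ^ k * Fd (k + 1) (r + (t:ℂ) * (z - r)))‖ := by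
          rw [intSeq, norm_neg]
        rw [this]
        simpa using hnorm
      have hpow : (1 + ‖z‖) ^ N ≤ (2 + ‖r‖) ^ N := by
        apply pow_le_pow_left₀ (by positivity)
        linarith
      calc (1 + ‖z‖) ^ N * ‖intSeq Fd r k z‖
          ≤ (2 + ‖r‖) ^ N * C0 := by
            apply mul_le_mul hpow hI (norm_nonneg _) (by positivity)
        _ ≤ max C1 ((2 + ‖r‖) ^ N * C0) := le_max_right _ _
  · -- root outside the strip
    have hm0 : 0 < |r.re| - a := by
      have : ¬ |r.re| ≤ a := hr
      push_neg at this
      linarith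
    have hlow : ∀ z ∈ Strip a, |r.re| - a ≤ ‖r - z‖ := by
      intro z hz
      have h1 : |r.re| - |z.re| ≤ |r.re - z.re| := abs_sub_abs_le_abs_sub _ _
      have h2 : |(r - z).re| ≤ ‖r - z‖ := Complex.abs_re_le_norm _
      have h3 : (r - z).re = r.re - z.re := Complex.sub_re r z
      have hz' : |z.re| ≤ a := hz
      rw [h3] at h2
      linarith
    have hne : ∀ z ∈ Strip a, r - z ≠ 0 := by
      intro z hz h0
      have := hlow z hz
      rw [h0] at this
      simp at this
      linarith
    refine ⟨divSeq F Fd r 0, divSeq F Fd r, ?_, ?_⟩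
    · apply stripSchwartz_of (fun _ _ => rfl)
        (fun k z hz => divSeq_hasDerivAt hF hz (hne z (stripO_subset hz)) k)
        (divSeq_continuousOn hF (fun z hz => hz) hne)
        (divSeq_bound hF (Strip a) (fun z hz => hz) hm0 hlow)
    · intro ν hν
      show F ν = (r - ν) * (F ν * (r - ν)⁻¹)
      rw [mul_comm (F ν) _, ← mul_assoc, mul_inv_cancel₀ (hne ν hν), one_mul]

end StripAux


/-- **Scalar form of Lemma 2.2.9 of the paper.** Let
`p(ν) = (ν+ρ)(ν+ρ+1)⋯(ν+ρ+s−1)` (with `p ≡ 1` if `s = 0`).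
(a) If `G ∈ 𝓢(S_a)` is even, then `F = p(−·) G` is in `𝓢(S_a)` and satisfies the symmetry
condition `p(−ν) F(−ν) = p(ν) F(ν)` on `S_a`.
(b) Conversely, any `F ∈ 𝓢(S_a)` satisfying this symmetry condition is of the form
`F = p(−·) G` for a unique even `G ∈ 𝓢(S_a)`; hence `G ↦ p(−·) G` is a bijection between
even strip-Schwartz functions and those satisfying the symmetry condition. -/
theorem stmt_10 (a ρ : ℝ) (ha : 0 < a) (hρ : 0 < ρ) (s : ℕ)
    (p : ℂ → ℂ) (hp : ∀ ν : ℂ, p ν = ∏ i ∈ Finset.range s, (ν + (ρ : ℂ) + (i : ℂ))) :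
    (∀ (G : ℂ → ℂ) (Gd : ℕ → ℂ → ℂ), StripSchwartz a G Gd →
      (∀ ν ∈ Strip a, G (-ν) = G ν) →
      (∃ Fd : ℕ → ℂ → ℂ, StripSchwartz a (fun ν : ℂ => p (-ν) * G ν) Fd) ∧
      (∀ ν ∈ Strip a, p (-ν) * (p ν * G (-ν)) = p ν * (p (-ν) * G ν))) ∧
    (∀ (F : ℂ → ℂ) (Fd : ℕ → ℂ → ℂ), StripSchwartz a F Fd →
      (∀ ν ∈ Strip a, p (-ν) * F (-ν) = p ν * F ν) →
      ∃ (G : ℂ → ℂ) (Gd : ℕ → ℂ → ℂ), StripSchwartz a G Gd ∧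
        (∀ ν ∈ Strip a, G (-ν) = G ν) ∧
        (∀ ν ∈ Strip a, F ν = p (-ν) * G ν) ∧
        (∀ G' : ℂ → ℂ, ContinuousOn G' (Strip a) →
          (∀ ν ∈ Strip a, F ν = p (-ν) * G' ν) →
          ∀ ν ∈ Strip a, G' ν = G ν)) := by
  constructor
  · intro G Gd hG hGeven
    constructor
    · obtain ⟨Fd, hFd⟩ := StripAux.mul_prod (fun i : ℕ => (ρ:ℂ) + i) hG s
      have hfun : (fun ν : ℂ => p (-ν) * G ν)
          = fun ν => (∏ i ∈ Finset.range s, (((ρ:ℂ) + i) - ν)) * G ν := by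
        funext ν
        rw [hp (-ν)]
        congr 1
        apply Finset.prod_congr rfl
        intro i _
        ring
      exact ⟨Fd, hfun ▸ hFd⟩
    · intro ν hν
      rw [hGeven ν hν]
      ring
  · intro F Fd hF hsym
    have hvanish : ∀ i : ℕ, i < s → ((ρ:ℂ) + i) ∈ Strip a → F ((ρ:ℂ) + i) = 0 := by
      intro i hi hmem
      have h := hsym _ hmem
      have h1 : p (-((ρ:ℂ) + i)) = 0 := by
        rw [hp]
        apply Finset.prod_eq_zero (Finset.mem_range.2 hi)
        ring
      have h2 : p ((ρ:ℂ) + i) ≠ 0 := by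
        rw [hp, Finset.prod_ne_zero_iff]
        intro j _ h0
        have hre := congrArg Complex.re h0
        simp only [Complex.add_re, Complex.ofReal_re, Complex.natCast_re, Complex.zero_re] at hre
        have hi0 : (0:ℝ) ≤ (i:ℝ) := Nat.cast_nonneg i
        have hj0 : (0:ℝ) ≤ (j:ℝ) := Nat.cast_nonneg j
        linarith
      rw [h1, zero_mul] at h
      rcases mul_eq_zero.1 h.symm with h3 | h3
      · exact absurd h3 h2
      · exact h3
    have main : ∀ i : ℕ, i ≤ s → ∃ G Gd, StripSchwartz a G Gd ∧
        ∀ ν ∈ Strip a, F ν = (∏ j ∈ Finset.range i, (((ρ:ℂ) + j) - ν)) * G ν := by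
      intro i
      induction i with
      | zero => exact fun _ => ⟨F, Fd, hF, fun ν _ => by simp⟩
      | succ i ih =>
        intro his
        obtain ⟨G, Gd, hG, hid⟩ := ih (Nat.le_of_succ_le his)
        have hvan' : ((ρ:ℂ) + i) ∈ Strip a → G ((ρ:ℂ) + i) = 0 := by
          intro hmem
          have h0 := hid _ hmem
          have hFr := hvanish i (Nat.lt_of_succ_le his) hmem
          have hprod : (∏ j ∈ Finset.range i, (((ρ:ℂ) + j) - ((ρ:ℂ) + i))) ≠ 0 := by
            rw [Finset.prod_ne_zero_iff]
            intro j hj h0'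
            have he : ((j:ℂ)) = (i:ℂ) := by
              have harr : ((ρ:ℂ) + j) - ((ρ:ℂ) + i) = (j:ℂ) - i := by ring
              rw [harr] at h0'
              exact sub_eq_zero.1 h0'
            have hji : j = i := by exact_mod_cast he
            rw [Finset.mem_range] at hj
            omega
          rw [hFr] at h0
          rcases mul_eq_zero.1 h0.symm with h3 | h3
          · exact absurd h3 hprod
          · exact h3
        obtain ⟨G', Gd', hG', hid'⟩ := StripAux.div_step ha ((ρ:ℂ) + i) hG hvan'
        refine ⟨G', Gd', hG', ?_⟩
        intro ν hν
        rw [Finset.prod_range_succ, hid ν hν, hid' ν hν]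
        ring
    obtain ⟨G, Gd, hG, hid⟩ := main s le_rfl
    have hidp : ∀ ν ∈ Strip a, F ν = p (-ν) * G ν := by
      intro ν hν
      rw [hp (-ν), hid ν hν]
      congr 1
      apply Finset.prod_congr rfl
      intro i _
      ring
    set Z : Set ℂ := ((fun i : ℕ => ((ρ:ℂ) + i)) '' ↑(Finset.range s)) ∪
      ((fun i : ℕ => -((ρ:ℂ) + i)) '' ↑(Finset.range s)) with hZdef
    have hZfin : Z.Finite :=
      ((Finset.range s).finite_toSet.image _).union ((Finset.range s).finite_toSet.image _)
    have hZ0 : (0:ℂ) ∉ Z := by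
      intro h
      have hpos : ∀ i : ℕ, ρ + (i:ℝ) ≠ 0 := by
        intro i
        have : (0:ℝ) ≤ (i:ℝ) := Nat.cast_nonneg i
        intro h0
        linarith
      rcases h with ⟨i, _, he⟩ | ⟨i, _, he⟩
      · have := congrArg Complex.re he
        simp only [Complex.add_re, Complex.ofReal_re, Complex.natCast_re, Complex.zero_re] at this
        exact hpos i this
      · have := congrArg Complex.re he
        simp only [Complex.neg_re, Complex.add_re, Complex.ofReal_re, Complex.natCast_re,
          Complex.zero_re, neg_eq_zero] at this
        exact hpos i this
    have hroot : ∀ ν : ℂ, ν ∉ Z → p ν ≠ 0 := by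
      intro ν hν h0
      rw [hp, Finset.prod_eq_zero_iff] at h0
      obtain ⟨i, hi, hzero⟩ := h0
      apply hν
      right
      refine ⟨i, by simpa using hi, ?_⟩
      linear_combination -hzero
    have hrootneg : ∀ ν : ℂ, ν ∉ Z → p (-ν) ≠ 0 := by
      intro ν hν h0
      rw [hp, Finset.prod_eq_zero_iff] at h0
      obtain ⟨i, hi, hzero⟩ := h0
      apply hν
      left
      refine ⟨i, by simpa using hi, ?_⟩
      linear_combination hzero
    have heven : ∀ ν ∈ Strip a, G (-ν) = G ν := by
      have hcneg : ContinuousOn (fun ν => G (-ν)) (Strip a) :=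
        hG.1.comp continuous_neg.continuousOn (fun ν hν => StripAux.neg_mem_strip hν)
      intro ν hν
      apply StripAux.eqOn_strip_full ha Z hZfin hZ0 hcneg hG.1 ?_ ν hν
      intro z hz
      have hzS : z ∈ Strip a := StripAux.stripO_subset hz.1
      have h1 := hsym z hzS
      have h2 := hidp z hzS
      have h3 := hidp (-z) (StripAux.neg_mem_strip hzS)
      rw [neg_neg] at h3
      rw [h2, h3] at h1
      have h4 : (p (-z) * p z) * G (-z) = (p (-z) * p z) * G z := by linear_combination h1
      exact mul_left_cancel₀ (mul_ne_zero (hrootneg z hz.2) (hroot z hz.2)) h4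
    have huniq : ∀ G' : ℂ → ℂ, ContinuousOn G' (Strip a) →
        (∀ ν ∈ Strip a, F ν = p (-ν) * G' ν) → ∀ ν ∈ Strip a, G' ν = G ν := by
      intro G' hc hid' ν hν
      apply StripAux.eqOn_strip_full ha Z hZfin hZ0 hc hG.1 ?_ ν hν
      intro z hz
      have hzS := StripAux.stripO_subset hz.1
      have h4 : p (-z) * G' z = p (-z) * G z := by rw [← hid' z hzS, hidp z hzS]
      exact mul_left_cancel₀ (hrootneg z hz.2) h4
    exact ⟨G, Gd, hG, heven, hidp, huniq⟩
end

section
/- Let a > 0, let F ∈ 𝓢(S_a), and let ν₀ ∈ S_a be such that F(ν₀) = 0. Define G : S_a → ℂ by G(ν) = F(ν)/(ν − ν₀) for ν ≠ ν₀ and G(ν₀) = F^{(1)}(ν₀) (the continuous extension of the first derivative of F at ν₀). Then G ∈ 𝓢(S_a), and for every N, k ∈ ℕ there is a constant C > 0, depending only on a, ν₀, N, k, such that sup_{ν ∈ S_a} (1+|ν|)^N |G^{(k)}(ν)| ≤ C · max_{j ≤ k+1} sup_{ν ∈ S_a} (1+|ν|)^N |F^{(j)}(ν)|; in particular, derivatives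 of G up to order k are controlled by derivatives of F up to order k+1. -/
open MeasureTheory Complex

namespace StripDivAux

/-- The basic parametric integrals `J m j ν = ∫₀¹ t^m Fd j (ν₀ + t(ν-ν₀)) dt`. -/
noncomputable def divJ (ν₀ : ℂ) (Fd : ℕ → ℂ → ℂ) (m j : ℕ) (ν : ℂ) : ℂ :=
  ∫ t in (0:ℝ)..1, ((t:ℂ))^m * Fd j (ν₀ + (t:ℂ) * (ν - ν₀))

/-- The combinatorial constants of the recursion. -/
noncomputable def cseq : ℕ → ℝ
  | 0 => 1
  | n+1 => (n+1) * cseq n + 1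

lemma one_le_cseq : ∀ n, 1 ≤ cseq n
  | 0 => le_refl 1
  | n+1 => by
      have h := one_le_cseq n
      have hn : (0:ℝ) ≤ (n:ℝ) + 1 := by positivity
      simp only [cseq]
      nlinarith

lemma stripO_subset {a : ℝ} : StripO a ⊆ Strip a := fun z hz => show |z.re| ≤ a from le_of_lt hz

lemma isOpen_stripO (a : ℝ) : IsOpen (StripO a) :=
  isOpen_lt (continuous_abs.comp Complex.continuous_re) continuous_const

lemma seg_re (ν₀ ν : ℂ) (t : ℝ) :
    (ν₀ + (t:ℂ) * (ν - ν₀)).re = (1 - t) * ν₀.re + t * ν.re := by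
  simp [Complex.add_re, Complex.mul_re, Complex.ofReal_re, Complex.ofReal_im,
    Complex.sub_re, Complex.sub_im]
  ring

lemma seg_mem_strip {a : ℝ} {ν₀ ν : ℂ} (h0 : ν₀ ∈ Strip a) (h1 : ν ∈ Strip a)
    {t : ℝ} (ht0 : 0 ≤ t) (ht1 : t ≤ 1) : ν₀ + (t:ℂ) * (ν - ν₀) ∈ Strip a := by
  simp only [Strip, Set.mem_setOf_eq] at *
  rw [seg_re]
  have h2 : |(1 - t) * ν₀.re + t * ν.re| ≤ (1 - t) * |ν₀.re| + t * |ν.re| := by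
    refine (abs_add_le _ _).trans ?_
    rw [_root_.abs_mul, _root_.abs_mul, _root_.abs_of_nonneg (show (0:ℝ) ≤ 1 - t by linarith), _root_.abs_of_nonneg ht0]
  nlinarith [abs_nonneg ν₀.re, abs_nonneg ν.re]

lemma seg_mem_stripO {a : ℝ} {ν₀ ν : ℂ} (h0 : ν₀ ∈ Strip a) (h1 : ν ∈ StripO a)
    {t : ℝ} (ht0 : 0 < t) (ht1 : t ≤ 1) : ν₀ + (t:ℂ) * (ν - ν₀) ∈ StripO a := by
  simp only [Strip, StripO, Set.mem_setOf_eq] at *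
  rw [seg_re]
  have h2 : |(1 - t) * ν₀.re + t * ν.re| ≤ (1 - t) * |ν₀.re| + t * |ν.re| := by
    refine (abs_add_le _ _).trans ?_
    rw [_root_.abs_mul, _root_.abs_mul, _root_.abs_of_nonneg (show (0:ℝ) ≤ 1 - t by linarith), _root_.abs_of_nonneg ht0.le]
  nlinarith [abs_nonneg ν₀.re, abs_nonneg ν.re]

section density

variable {a : ℝ}

lemma strip_approx (ha : 0 < a) {ν : ℂ} (hν : ν ∈ Strip a) :
    ∃ u : ℕ → ℂ, (∀ n, u n ∈ StripO a) ∧ Filter.Tendsto u Filter.atTop (nhds ν) := by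
  refine ⟨fun n => (((1 - 1/((n:ℝ)+1)) * ν.re : ℝ) : ℂ) + (ν.im : ℂ) * Complex.I,
    fun n => ?_, ?_⟩
  · have hn : 0 < 1/((n:ℝ)+1) := by positivity
    have hn1 : 1/((n:ℝ)+1) ≤ 1 := by
      rw [div_le_one (by positivity)]; linarith
    simp only [StripO, Set.mem_setOf_eq]
    have hre : ∀ r s : ℝ, ((r : ℂ) + (s : ℂ) * Complex.I).re = r := fun r s => by
      simp [Complex.add_re, Complex.ofReal_re, Complex.mul_re, Complex.I_re, Complex.I_im,
        Complex.ofReal_im]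
    rw [hre, _root_.abs_mul, _root_.abs_of_nonneg (show (0:ℝ) ≤ 1 - 1/((n:ℝ)+1) by linarith)]
    have hν' : |ν.re| ≤ a := hν
    nlinarith [abs_nonneg ν.re]
  · have h1 : Filter.Tendsto (fun n : ℕ => 1 - 1/((n:ℝ)+1)) Filter.atTop (nhds 1) := by
      have h0 := tendsto_one_div_add_atTop_nhds_zero_nat (𝕜 := ℝ)
      simpa using tendsto_const_nhds.sub h0
    have hr : Filter.Tendsto (fun n : ℕ => (1 - 1/((n:ℝ)+1)) * ν.re) Filter.atTop
        (nhds ν.re) := by simpa using h1.mul_const ν.re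
    have hc : Filter.Tendsto (fun n : ℕ => (((1 - 1/((n:ℝ)+1)) * ν.re : ℝ) : ℂ))
        Filter.atTop (nhds ((ν.re : ℝ) : ℂ)) := (Complex.continuous_ofReal.tendsto _).comp hr
    have h4 := hc.add (tendsto_const_nhds (x := ((ν.im : ℂ) * Complex.I)))
    simpa [Complex.re_add_im] using h4

lemma dense_le (ha : 0 < a) {f : ℂ → ℝ} {C : ℝ} (hf : ContinuousOn f (Strip a))
    (h : ∀ z ∈ StripO a, f z ≤ C) : ∀ z ∈ Strip a, f z ≤ C := by
  intro z hz
  obtain ⟨u, hu, hlim⟩ := strip_approx ha hz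
  have hlim' : Filter.Tendsto u Filter.atTop (nhdsWithin z (Strip a)) :=
    tendsto_nhdsWithin_of_tendsto_nhds_of_eventually_within u hlim
      (Filter.Eventually.of_forall fun n => stripO_subset (hu n))
  have htend : Filter.Tendsto (fun n => f (u n)) Filter.atTop (nhds (f z)) :=
    (hf z hz).tendsto.comp hlim'
  exact le_of_tendsto htend (Filter.Eventually.of_forall fun n => h _ (hu n))

lemma dense_eq (ha : 0 < a) {f g : ℂ → ℂ} (hf : ContinuousOn f (Strip a))
    (hg : ContinuousOn g (Strip a)) (h : ∀ z ∈ StripO a, f z = g z) :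
    ∀ z ∈ Strip a, f z = g z := by
  intro z hz
  obtain ⟨u, hu, hlim⟩ := strip_approx ha hz
  have hlim' : Filter.Tendsto u Filter.atTop (nhdsWithin z (Strip a)) :=
    tendsto_nhdsWithin_of_tendsto_nhds_of_eventually_within u hlim
      (Filter.Eventually.of_forall fun n => stripO_subset (hu n))
  have h1 : Filter.Tendsto (fun n => f (u n)) Filter.atTop (nhds (f z)) :=
    (hf z hz).tendsto.comp hlim'
  have h2 : Filter.Tendsto (fun n => f (u n)) Filter.atTop (nhds (g z)) := by
    have := (hg z hz).tendsto.comp hlim'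
    refine this.congr fun n => ?_
    exact (h _ (hu n)).symm
  exact tendsto_nhds_unique h1 h2

end density

section main

variable {a : ℝ} {ν₀ : ℂ} {F : ℂ → ℂ} {Fd : ℕ → ℂ → ℂ}

lemma Fd_bdd (hF : StripSchwartz a F Fd) (j : ℕ) :
    ∃ B : ℝ, 0 ≤ B ∧ ∀ z ∈ Strip a, ‖Fd j z‖ ≤ B := by
  obtain ⟨C, hC⟩ := hF.2.2.2.2.2 0 j
  refine ⟨max C 0, le_max_right _ _, fun z hz => ?_⟩
  have h := hC z hz
  simp only [pow_zero, one_mul] at h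
  exact h.trans (le_max_left _ _)

lemma cont_integrand (hν₀ : ν₀ ∈ Strip a) (hF : StripSchwartz a F Fd) (m j : ℕ)
    {ν : ℂ} (hν : ν ∈ Strip a) :
    ContinuousOn (fun t : ℝ => ((t:ℂ))^m * Fd j (ν₀ + (t:ℂ) * (ν - ν₀))) (Set.Icc 0 1) := by
  apply ContinuousOn.mul
  · exact (Complex.continuous_ofReal.pow m).continuousOn
  · have hmap : Set.MapsTo (fun t : ℝ => ν₀ + (t:ℂ) * (ν - ν₀)) (Set.Icc 0 1) (Strip a) :=
      fun t ht => seg_mem_strip hν₀ hν ht.1 ht.2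
    exact (hF.2.2.2.2.1 j).comp (Continuous.continuousOn (by continuity)) hmap

lemma integrable_integrand (hν₀ : ν₀ ∈ Strip a) (hF : StripSchwartz a F Fd) (m j : ℕ)
    {ν : ℂ} (hν : ν ∈ Strip a) :
    IntervalIntegrable (fun t : ℝ => ((t:ℂ))^m * Fd j (ν₀ + (t:ℂ) * (ν - ν₀))) volume 0 1 := by
  apply ContinuousOn.intervalIntegrable
  rw [Set.uIcc_of_le (zero_le_one)]
  exact cont_integrand hν₀ hF m j hν

lemma divJ_contOn (hν₀ : ν₀ ∈ Strip a) (hF : StripSchwartz a F Fd) (m j : ℕ) :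
    ContinuousOn (divJ ν₀ Fd m j) (Strip a) := by
  intro ν hν
  obtain ⟨B, hB0, hB⟩ := Fd_bdd hF j
  apply intervalIntegral.continuousWithinAt_of_dominated_interval (bound := fun _ => B)
  · filter_upwards [self_mem_nhdsWithin] with x hx
    rw [Set.uIoc_of_le (zero_le_one (α := ℝ))]
    exact ((cont_integrand hν₀ hF m j hx).mono Set.Ioc_subset_Icc_self).aestronglyMeasurable
      measurableSet_Ioc
  · filter_upwards [self_mem_nhdsWithin] with x hx
    refine Filter.Eventually.of_forall fun t ht => ?_
    rw [Set.uIoc_of_le (zero_le_one (α := ℝ))] at ht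
    have hseg := seg_mem_strip hν₀ hx ht.1.le ht.2
    rw [norm_mul, norm_pow, Complex.norm_real, Real.norm_eq_abs, _root_.abs_of_nonneg ht.1.le]
    calc t ^ m * ‖Fd j (ν₀ + (t:ℂ) * (x - ν₀))‖
        ≤ 1 * B := by
          apply mul_le_mul (pow_le_one₀ ht.1.le ht.2) _ (norm_nonneg _) zero_le_one
          simpa using hB _ hseg
      _ = B := one_mul B
  · exact intervalIntegrable_const
  · refine Filter.Eventually.of_forall fun t ht => ?_
    rw [Set.uIoc_of_le (zero_le_one (α := ℝ))] at ht
    have hseg := seg_mem_strip hν₀ hν ht.1.le ht.2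
    have hc : ContinuousWithinAt (fun x : ℂ => Fd j (ν₀ + (t:ℂ) * (x - ν₀))) (Strip a) ν := by
      have hmap : Set.MapsTo (fun x : ℂ => ν₀ + (t:ℂ) * (x - ν₀)) (Strip a) (Strip a) :=
        fun x hx => seg_mem_strip hν₀ hx ht.1.le ht.2
      exact ContinuousWithinAt.comp (hF.2.2.2.2.1 j _ hseg)
        (Continuous.continuousWithinAt (by continuity)) hmap
    exact continuousWithinAt_const.mul hc

lemma hasDerivAt_Fd (hF : StripSchwartz a F Fd) (m : ℕ) {z : ℂ} (hz : z ∈ StripO a) :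
    HasDerivAt (Fd m) (Fd (m+1) z) z := by
  have hA : AnalyticOnNhd ℂ F (StripO a) := hF.2.1.analyticOnNhd (isOpen_stripO a)
  have hAk : ∀ n : ℕ, AnalyticOnNhd ℂ (iteratedDeriv n F) (StripO a) := by
    intro n
    induction n with
    | zero => simpa [iteratedDeriv_zero] using hA
    | succ n ih => rw [iteratedDeriv_succ]; exact ih.deriv
  have h1 : HasDerivAt (iteratedDeriv m F) (iteratedDeriv (m+1) F z) z := by
    rw [iteratedDeriv_succ]
    exact ((hAk m) z hz).differentiableAt.hasDerivAt
  have heq : Fd m =ᶠ[nhds z] iteratedDeriv m F := by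
    filter_upwards [(isOpen_stripO a).mem_nhds hz] with w hw
    exact hF.2.2.2.1 m w hw
  rw [hF.2.2.2.1 (m+1) z hz]
  exact h1.congr_of_eventuallyEq heq

lemma key_identity (hν₀ : ν₀ ∈ Strip a) (hF : StripSchwartz a F Fd) (hF0 : F ν₀ = 0)
    (m : ℕ) {ν : ℂ} (hν : ν ∈ StripO a) :
    (ν - ν₀) * divJ ν₀ Fd m (m+1) ν = Fd m ν - (m:ℂ) * divJ ν₀ Fd (m-1) m ν := by
  have hνS : ν ∈ Strip a := stripO_subset hν
  have hφcont : ContinuousOn (fun t : ℝ => ((t:ℂ))^m * Fd m (ν₀ + (t:ℂ) * (ν - ν₀)))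
      (Set.Icc 0 1) := cont_integrand hν₀ hF m m hνS
  have hder : ∀ t ∈ Set.Ioo (0:ℝ) 1,
      HasDerivAt (fun s : ℝ => ((s:ℂ))^m * Fd m (ν₀ + (s:ℂ) * (ν - ν₀)))
        ((m:ℂ) * (((t:ℂ))^(m-1) * Fd m (ν₀ + (t:ℂ) * (ν - ν₀)))
          + (ν - ν₀) * (((t:ℂ))^m * Fd (m+1) (ν₀ + (t:ℂ) * (ν - ν₀)))) t := by
    intro t ht
    have hseg : ν₀ + (t:ℂ) * (ν - ν₀) ∈ StripO a := seg_mem_stripO hν₀ hν ht.1 ht.2.le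
    have haff : HasDerivAt (fun w : ℂ => ν₀ + w * (ν - ν₀)) (ν - ν₀) ((t:ℝ):ℂ) := by
      simpa using ((hasDerivAt_id ((t:ℝ):ℂ)).mul_const (ν - ν₀)).const_add ν₀
    have h2c : HasDerivAt (fun w : ℂ => Fd m (ν₀ + w * (ν - ν₀)))
        (Fd (m+1) (ν₀ + (t:ℂ) * (ν - ν₀)) * (ν - ν₀)) ((t:ℝ):ℂ) :=
      (hasDerivAt_Fd hF m hseg).comp ((t:ℝ):ℂ) haff
    have h2 : HasDerivAt (fun s : ℝ => Fd m (ν₀ + (s:ℂ) * (ν - ν₀)))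
        (Fd (m+1) (ν₀ + (t:ℂ) * (ν - ν₀)) * (ν - ν₀)) t := h2c.comp_ofReal
    have h1 : HasDerivAt (fun s : ℝ => ((s:ℂ))^m) ((m:ℂ) * ((t:ℂ))^(m-1)) t :=
      (hasDerivAt_pow m ((t:ℝ):ℂ)).comp_ofReal
    have hmul : HasDerivAt (fun s : ℝ => ((s:ℂ))^m * Fd m (ν₀ + (s:ℂ) * (ν - ν₀))) _ t := h1.mul h2
    convert hmul using 1
    ring
  have hint1 : IntervalIntegrable
      (fun t : ℝ => ((t:ℂ))^(m-1) * Fd m (ν₀ + (t:ℂ) * (ν - ν₀))) volume 0 1 :=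
    integrable_integrand hν₀ hF (m-1) m hνS
  have hint2 : IntervalIntegrable
      (fun t : ℝ => ((t:ℂ))^m * Fd (m+1) (ν₀ + (t:ℂ) * (ν - ν₀))) volume 0 1 :=
    integrable_integrand hν₀ hF m (m+1) hνS
  have hint : IntervalIntegrable (fun t : ℝ =>
      (m:ℂ) * (((t:ℂ))^(m-1) * Fd m (ν₀ + (t:ℂ) * (ν - ν₀)))
        + (ν - ν₀) * (((t:ℂ))^m * Fd (m+1) (ν₀ + (t:ℂ) * (ν - ν₀)))) volume 0 1 :=
    (hint1.const_mul _).add (hint2.const_mul _)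
  have hFTC := intervalIntegral.integral_eq_sub_of_hasDerivAt_of_le zero_le_one hφcont hder hint
  rw [intervalIntegral.integral_add (hint1.const_mul _) (hint2.const_mul _),
    intervalIntegral.integral_const_mul, intervalIntegral.integral_const_mul] at hFTC
  have hend : (((1:ℝ):ℂ))^m * Fd m (ν₀ + ((1:ℝ):ℂ) * (ν - ν₀))
      - (((0:ℝ):ℂ))^m * Fd m (ν₀ + ((0:ℝ):ℂ) * (ν - ν₀)) = Fd m ν := by
    have hγ1 : ν₀ + ((1:ℝ):ℂ) * (ν - ν₀) = ν := by push_cast; ring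
    have hγ0 : ν₀ + ((0:ℝ):ℂ) * (ν - ν₀) = ν₀ := by push_cast; ring
    rw [hγ1, hγ0]
    rcases Nat.eq_zero_or_pos m with hm | hm
    · subst hm
      simp [hF.2.2.1 ν₀ hν₀, hF0]
    · push_cast
      rw [zero_pow (Nat.pos_iff_ne_zero.mp hm)]
      simp
  rw [hend] at hFTC
  simp only [divJ]
  linear_combination hFTC

lemma divJ_hasDerivAt (hν₀ : ν₀ ∈ Strip a) (hF : StripSchwartz a F Fd) (m j : ℕ)
    {ν : ℂ} (hν : ν ∈ StripO a) :
    HasDerivAt (divJ ν₀ Fd m j) (divJ ν₀ Fd (m+1) (j+1) ν) ν := by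
  obtain ⟨ε, hε, hball⟩ := Metric.isOpen_iff.mp (isOpen_stripO a) ν hν
  obtain ⟨B, hB0, hB⟩ := Fd_bdd hF (j+1)
  have h := intervalIntegral.hasDerivAt_integral_of_dominated_loc_of_deriv_le (μ := volume)
    (a := (0:ℝ)) (b := 1)
    (F := fun (x : ℂ) (t : ℝ) => ((t:ℂ))^m * Fd j (ν₀ + (t:ℂ) * (x - ν₀)))
    (F' := fun (x : ℂ) (t : ℝ) => ((t:ℂ))^(m+1) * Fd (j+1) (ν₀ + (t:ℂ) * (x - ν₀)))
    (bound := fun _ => B) (x₀ := ν) (s := Metric.ball ν ε) (Metric.ball_mem_nhds ν hε) ?_ ?_ ?_ ?_ ?_ ?_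
  · exact h.2
  · filter_upwards [Metric.ball_mem_nhds ν hε] with x hx
    rw [Set.uIoc_of_le (zero_le_one (α := ℝ))]
    exact ((cont_integrand hν₀ hF m j (stripO_subset (hball hx))).mono
      Set.Ioc_subset_Icc_self).aestronglyMeasurable measurableSet_Ioc
  · exact integrable_integrand hν₀ hF m j (stripO_subset hν)
  · rw [Set.uIoc_of_le (zero_le_one (α := ℝ))]
    exact ((cont_integrand hν₀ hF (m+1) (j+1) (stripO_subset hν)).mono
      Set.Ioc_subset_Icc_self).aestronglyMeasurable measurableSet_Ioc
  · refine Filter.Eventually.of_forall fun t ht => ?_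
    rw [Set.uIoc_of_le (zero_le_one (α := ℝ))] at ht
    intro x hx
    have hseg := seg_mem_strip hν₀ (stripO_subset (hball hx)) ht.1.le ht.2
    rw [norm_mul, norm_pow, Complex.norm_real, Real.norm_eq_abs, _root_.abs_of_nonneg ht.1.le]
    calc t ^ (m+1) * ‖Fd (j+1) (ν₀ + (t:ℂ) * (x - ν₀))‖
        ≤ 1 * B := by
          apply mul_le_mul (pow_le_one₀ ht.1.le ht.2) _ (norm_nonneg _) zero_le_one
          simpa using hB _ hseg
      _ = B := one_mul B
  · exact intervalIntegrable_const
  · refine Filter.Eventually.of_forall fun t ht => ?_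
    rw [Set.uIoc_of_le (zero_le_one (α := ℝ))] at ht
    intro x hx
    have hxO := hball hx
    have hseg : ν₀ + (t:ℂ) * (x - ν₀) ∈ StripO a := seg_mem_stripO hν₀ hxO ht.1 ht.2
    have haff : HasDerivAt (fun x : ℂ => ν₀ + (t:ℂ) * (x - ν₀)) ((t:ℂ)) x := by
      simpa using (((hasDerivAt_id x).sub_const ν₀).const_mul ((t:ℂ))).const_add ν₀
    have hc : HasDerivAt (fun x : ℂ => Fd j (ν₀ + (t:ℂ) * (x - ν₀)))
        (Fd (j+1) (ν₀ + (t:ℂ) * (x - ν₀)) * (t:ℂ)) x :=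
      (hasDerivAt_Fd hF j hseg).comp x haff
    have : HasDerivAt (fun x : ℂ => ((t:ℂ))^m * Fd j (ν₀ + (t:ℂ) * (x - ν₀))) _ x := hc.const_mul (((t:ℂ))^m)
    refine this.congr_deriv ?_
    ring

lemma F_eq (ha : 0 < a) (hν₀ : ν₀ ∈ Strip a) (hF : StripSchwartz a F Fd) (hF0 : F ν₀ = 0) :
    ∀ z ∈ Strip a, F z = (z - ν₀) * divJ ν₀ Fd 0 1 z := by
  apply dense_eq ha hF.1
  · exact ((continuous_id.sub continuous_const).continuousOn).mul (divJ_contOn hν₀ hF 0 1)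
  · intro z hz
    have h := key_identity hν₀ hF hF0 0 hz
    simp only [Nat.cast_zero, zero_mul, sub_zero] at h
    rw [← hF.2.2.1 z (stripO_subset hz)]
    exact h.symm

lemma G_eq (ha : 0 < a) (hν₀ : ν₀ ∈ Strip a) (hF : StripSchwartz a F Fd) (hF0 : F ν₀ = 0)
    {G : ℂ → ℂ} (hG : ∀ ν : ℂ, ν ≠ ν₀ → G ν = F ν / (ν - ν₀)) (hGν₀ : G ν₀ = Fd 1 ν₀) :
    ∀ z ∈ Strip a, G z = divJ ν₀ Fd 0 1 z := by
  intro z hz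
  by_cases h : z = ν₀
  · subst h
    rw [hGν₀]
    simp only [divJ, sub_self, mul_zero, add_zero, pow_zero, one_mul]
    rw [intervalIntegral.integral_const]
    simp
  · rw [hG z h, F_eq ha hν₀ hF hF0 z hz]
    field_simp [sub_ne_zero.mpr h]

lemma Gd_eq_iter (ha : 0 < a) (hν₀ : ν₀ ∈ Strip a) (hF : StripSchwartz a F Fd)
    (hF0 : F ν₀ = 0) {G : ℂ → ℂ} (hG : ∀ ν : ℂ, ν ≠ ν₀ → G ν = F ν / (ν - ν₀))
    (hGν₀ : G ν₀ = Fd 1 ν₀) (k : ℕ) :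
    ∀ z ∈ StripO a, iteratedDeriv k G z = divJ ν₀ Fd k (k+1) z := by
  have hEq : Set.EqOn G (divJ ν₀ Fd 0 1) (StripO a) :=
    fun z hz => G_eq ha hν₀ hF hF0 hG hGν₀ z (stripO_subset hz)
  have h2 : ∀ z ∈ StripO a, iteratedDeriv k (divJ ν₀ Fd 0 1) z = divJ ν₀ Fd k (k+1) z := by
    induction k with
    | zero => intro z _; simp [iteratedDeriv_zero]
    | succ k ih =>
      intro z hz
      rw [iteratedDeriv_succ]
      have hd : deriv (iteratedDeriv k (divJ ν₀ Fd 0 1)) z = deriv (divJ ν₀ Fd k (k+1)) z := by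
        apply Filter.EventuallyEq.deriv_eq
        filter_upwards [(isOpen_stripO a).mem_nhds hz] with w hw using ih w hw
      rw [hd, (divJ_hasDerivAt hν₀ hF k (k+1) hz).deriv]
  intro z hz
  rw [hEq.iteratedDeriv_of_isOpen (isOpen_stripO a) k hz, h2 z hz]

lemma divJ_bound (hν₀ : ν₀ ∈ Strip a) (hF : StripSchwartz a F Fd) (hF0 : F ν₀ = 0)
    (N k : ℕ) (M : ℝ)
    (hM : ∀ j ≤ k + 1, ∀ z ∈ Strip a, (1 + ‖z‖) ^ N * ‖Fd j z‖ ≤ M) :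
    ∀ z ∈ StripO a, (1 + ‖z‖) ^ N * ‖divJ ν₀ Fd k (k+1) z‖ ≤
      ((2 + ‖ν₀‖) ^ N + cseq k) * M := by
  have hM0 : 0 ≤ M := le_trans (by positivity) (hM 0 (by omega) ν₀ hν₀)
  intro z hz
  have hzS : z ∈ Strip a := stripO_subset hz
  have hw0 : (0:ℝ) ≤ (1 + ‖z‖) ^ N := by positivity
  have hc2 : (0:ℝ) ≤ (2 + ‖ν₀‖) ^ N := by positivity
  have hck := one_le_cseq k
  by_cases hfar : 1 ≤ ‖z - ν₀‖
  · have hfarb : ∀ m, m + 1 ≤ k + 1 →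
        (1 + ‖z‖) ^ N * ‖divJ ν₀ Fd m (m+1) z‖ ≤ cseq m * M := by
      intro m
      induction m with
      | zero =>
        intro _
        have hk0 := key_identity hν₀ hF hF0 0 hz
        simp only [Nat.cast_zero, zero_mul, sub_zero] at hk0
        have habs : ‖z - ν₀‖ * ‖divJ ν₀ Fd 0 1 z‖
            = ‖Fd 0 z‖ := by rw [← norm_mul, hk0]
        have hle : ‖divJ ν₀ Fd 0 1 z‖ ≤ ‖Fd 0 z‖ := by
          nlinarith [norm_nonneg (divJ ν₀ Fd 0 1 z)]
        calc (1 + ‖z‖) ^ N * ‖divJ ν₀ Fd 0 1 z‖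
            ≤ (1 + ‖z‖) ^ N * ‖Fd 0 z‖ :=
              mul_le_mul_of_nonneg_left hle hw0
          _ ≤ M := hM 0 (by omega) z hzS
          _ = cseq 0 * M := by simp [cseq]
      | succ m ih =>
        intro hm
        have hkm := key_identity hν₀ hF hF0 (m+1) hz
        simp only [Nat.add_sub_cancel] at hkm
        have habs : ‖z - ν₀‖ * ‖divJ ν₀ Fd (m+1) (m+2) z‖
            = ‖Fd (m+1) z - ((m+1 : ℕ) : ℂ) * divJ ν₀ Fd m (m+1) z‖ := by
          rw [← norm_mul, hkm]
        have htri : ‖Fd (m+1) z - ((m+1 : ℕ) : ℂ) * divJ ν₀ Fd m (m+1) z‖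
            ≤ ‖Fd (m+1) z‖ + ((m:ℝ)+1) * ‖divJ ν₀ Fd m (m+1) z‖ := by
          refine (norm_sub_le _ _).trans (le_of_eq ?_)
          rw [norm_mul, Complex.norm_natCast]
          push_cast
          ring
        have hle : ‖divJ ν₀ Fd (m+1) (m+2) z‖
            ≤ ‖Fd (m+1) z‖ + ((m:ℝ)+1) * ‖divJ ν₀ Fd m (m+1) z‖ := by
          nlinarith [norm_nonneg (divJ ν₀ Fd (m+1) (m+2) z)]
        have h1 : (1 + ‖z‖) ^ N * ‖Fd (m+1) z‖ ≤ M :=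
          hM (m+1) (by omega) z hzS
        have h2 : (1 + ‖z‖) ^ N * ‖divJ ν₀ Fd m (m+1) z‖
            ≤ cseq m * M := ih (by omega)
        have h3 := mul_le_mul_of_nonneg_left hle hw0
        have hcs : cseq (m+1) = ((m:ℝ)+1) * cseq m + 1 := by
          simp [cseq]
        rw [hcs]
        nlinarith [norm_nonneg (divJ ν₀ Fd m (m+1) z), hw0]
    calc (1 + ‖z‖) ^ N * ‖divJ ν₀ Fd k (k+1) z‖
        ≤ cseq k * M := hfarb k le_rfl
      _ ≤ ((2 + ‖ν₀‖) ^ N + cseq k) * M := by nlinarith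
  · push_neg at hfar
    have hJle : ‖divJ ν₀ Fd k (k+1) z‖ ≤ M := by
      have hb : ∀ t ∈ Set.uIoc (0:ℝ) 1,
          ‖((t:ℂ))^k * Fd (k+1) (ν₀ + (t:ℂ) * (z - ν₀))‖ ≤ M := by
        intro t ht
        rw [Set.uIoc_of_le (zero_le_one (α := ℝ))] at ht
        have hseg := seg_mem_strip hν₀ hzS ht.1.le ht.2
        have hone : (1:ℝ) ≤ (1 + ‖ν₀ + (t:ℂ) * (z - ν₀)‖) ^ N :=
          one_le_pow₀ (by linarith [norm_nonneg (ν₀ + (t:ℂ) * (z - ν₀))])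
        have hMs := hM (k+1) le_rfl _ hseg
        have hfd : ‖Fd (k+1) (ν₀ + (t:ℂ) * (z - ν₀))‖ ≤ M := by
          nlinarith [norm_nonneg (Fd (k+1) (ν₀ + (t:ℂ) * (z - ν₀)))]
        rw [norm_mul, norm_pow, Complex.norm_real, Real.norm_eq_abs,
          _root_.abs_of_nonneg ht.1.le]
        calc t ^ k * ‖Fd (k+1) (ν₀ + (t:ℂ) * (z - ν₀))‖ ≤ 1 * M := by
              apply mul_le_mul (pow_le_one₀ ht.1.le ht.2) _ (norm_nonneg _) zero_le_one
              simpa using hfd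
          _ = M := one_mul M
      have := intervalIntegral.norm_integral_le_of_norm_le_const hb
      simpa [divJ] using this
    have hwle : (1 + ‖z‖) ^ N ≤ (2 + ‖ν₀‖) ^ N := by
      apply pow_le_pow_left₀ (by positivity)
      have hz2 : ‖z‖ ≤ ‖ν₀‖ + ‖z - ν₀‖ := by
        simpa using norm_add_le ν₀ (z - ν₀)
      linarith
    calc (1 + ‖z‖) ^ N * ‖divJ ν₀ Fd k (k+1) z‖
        ≤ (2 + ‖ν₀‖) ^ N * M :=
          mul_le_mul hwle hJle (norm_nonneg _) hc2
      _ ≤ ((2 + ‖ν₀‖) ^ N + cseq k) * M := by nlinarith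

lemma exists_M (hF : StripSchwartz a F Fd) (N n : ℕ) :
    ∃ M : ℝ, 0 ≤ M ∧ ∀ j ≤ n, ∀ z ∈ Strip a,
      (1 + ‖z‖) ^ N * ‖Fd j z‖ ≤ M := by
  induction n with
  | zero =>
    obtain ⟨C, hC⟩ := hF.2.2.2.2.2 N 0
    refine ⟨max C 0, le_max_right _ _, fun j hj z hz => ?_⟩
    interval_cases j
    exact (hC z hz).trans (le_max_left _ _)
  | succ n ih =>
    obtain ⟨M, hM0, hM⟩ := ih
    obtain ⟨C, hC⟩ := hF.2.2.2.2.2 N (n+1)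
    refine ⟨max M C, le_trans hM0 (le_max_left _ _), fun j hj z hz => ?_⟩
    rcases Nat.lt_succ_iff_lt_or_eq.mp (Nat.lt_succ_of_le hj) with h | h
    · exact (hM j (Nat.lt_succ_iff.mp h) z hz).trans (le_max_left _ _)
    · subst h
      exact (hC z hz).trans (le_max_right _ _)

end main

end StripDivAux

/-- **Division lemma in `𝓢(S_a)`** (Step 4 of the proof of Theorem 2.3.9 of the paper).
If `F ∈ 𝓢(S_a)` vanishes at `ν₀ ∈ S_a` and `G ν = F ν / (ν − ν₀)` for `ν ≠ ν₀`,
`G ν₀ = F'(ν₀)`, then `G ∈ 𝓢(S_a)`, and for every `N, k` there is a constant `C > 0`,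
depending only on `a, ν₀, N, k`, such that the strip seminorm
`sup_{ν ∈ S_a} (1+|ν|)^N |G^{(k)}(ν)|` is at most `C` times the maximum over `j ≤ k+1`
of `sup_{ν ∈ S_a} (1+|ν|)^N |F^{(j)}(ν)|`. -/
theorem stmt_11 (a : ℝ) (ha : 0 < a) (ν₀ : ℂ) (hν₀ : ν₀ ∈ Strip a) :
    (∀ (F : ℂ → ℂ) (Fd : ℕ → ℂ → ℂ), StripSchwartz a F Fd → F ν₀ = 0 →
      ∀ G : ℂ → ℂ, (∀ ν : ℂ, ν ≠ ν₀ → G ν = F ν / (ν - ν₀)) → G ν₀ = Fd 1 ν₀ →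
      ∃ Gd : ℕ → ℂ → ℂ, StripSchwartz a G Gd) ∧
    (∀ N k : ℕ, ∃ C > (0 : ℝ),
      ∀ (F : ℂ → ℂ) (Fd : ℕ → ℂ → ℂ), StripSchwartz a F Fd → F ν₀ = 0 →
      ∀ (G : ℂ → ℂ) (Gd : ℕ → ℂ → ℂ),
        (∀ ν : ℂ, ν ≠ ν₀ → G ν = F ν / (ν - ν₀)) → G ν₀ = Fd 1 ν₀ →
        StripSchwartz a G Gd →
        ∀ M : ℝ,
        (∀ j ≤ k + 1, ∀ ν ∈ Strip a,
          (1 + ‖ν‖) ^ N * ‖Fd j ν‖ ≤ M) →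
        ∀ ν ∈ Strip a, (1 + ‖ν‖) ^ N * ‖Gd k ν‖ ≤ C * M) := by
  constructor
  · intro F Fd hF hF0 G hG hGν₀
    refine ⟨fun k => StripDivAux.divJ ν₀ Fd k (k+1), ?_, ?_, ?_, ?_, ?_, ?_⟩
    · exact (StripDivAux.divJ_contOn hν₀ hF 0 1).congr
        (fun z hz => StripDivAux.G_eq ha hν₀ hF hF0 hG hGν₀ z hz)
    · have hdiff : DifferentiableOn ℂ (StripDivAux.divJ ν₀ Fd 0 1) (StripO a) := fun z hz =>
        (StripDivAux.divJ_hasDerivAt hν₀ hF 0 1 hz).differentiableAt.differentiableWithinAt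
      exact hdiff.congr (fun z hz =>
        StripDivAux.G_eq ha hν₀ hF hF0 hG hGν₀ z (StripDivAux.stripO_subset hz))
    · exact fun z hz => (StripDivAux.G_eq ha hν₀ hF hF0 hG hGν₀ z hz).symm
    · exact fun k z hz => (StripDivAux.Gd_eq_iter ha hν₀ hF hF0 hG hGν₀ k z hz).symm
    · exact fun k => StripDivAux.divJ_contOn hν₀ hF k (k+1)
    · intro N k
      obtain ⟨M, hM0, hM⟩ := StripDivAux.exists_M hF N (k+1)
      refine ⟨((2 + ‖ν₀‖) ^ N + StripDivAux.cseq k) * M, ?_⟩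
      have hcont : ContinuousOn
          (fun z : ℂ => (1 + ‖z‖) ^ N * ‖StripDivAux.divJ ν₀ Fd k (k+1) z‖)
          (Strip a) := by
        apply ContinuousOn.mul
        · exact ((continuous_const.add continuous_norm).pow N).continuousOn
        · exact continuous_norm.comp_continuousOn (StripDivAux.divJ_contOn hν₀ hF k (k+1))
      exact StripDivAux.dense_le ha hcont (StripDivAux.divJ_bound hν₀ hF hF0 N k M hM)
  · intro N k
    refine ⟨(2 + ‖ν₀‖) ^ N + StripDivAux.cseq k, ?_, ?_⟩
    · have h1 := StripDivAux.one_le_cseq k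
      have h2 : (0:ℝ) ≤ (2 + ‖ν₀‖) ^ N := by positivity
      linarith
    · intro F Fd hF hF0 G Gd hG hGν₀ hGS M hM
      have hcont : ContinuousOn
          (fun z : ℂ => (1 + ‖z‖) ^ N * ‖Gd k z‖) (Strip a) := by
        apply ContinuousOn.mul
        · exact ((continuous_const.add continuous_norm).pow N).continuousOn
        · exact continuous_norm.comp_continuousOn (hGS.2.2.2.2.1 k)
      apply StripDivAux.dense_le ha hcont
      intro z hz
      rw [hGS.2.2.2.1 k z hz, StripDivAux.Gd_eq_iter ha hν₀ hF hF0 hG hGν₀ k z hz]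
      exact StripDivAux.divJ_bound hν₀ hF hF0 N k M hM z hz
end
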